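/- Let R be a ring in which 2 is invertible. Then a ∈ R has a Hirano inverse if and only if there exist idempotents e, f in the double commutant of a such that a + e - f is nilpotent. -/

import Mathlib

section CommAux
variable {A : Type*} [CommRing A]

private lemma nilp_mul (c : A) {q : A} (hq : IsNilpotent q) : IsNilpotent (c * q) :=
  (Commute.all c q).isNilpotent_mul_left hq

private lemma aux_unit (h2 : IsUnit ((1 : A) + 1)) (x : A) (hq : IsNilpotent (x ^ 3 - x)) :
    IsUnit (3 * x ^ 2 - 1) := by
  obtain ⟨u, hu⟩ := h2.exists_right_inv
  have key : (3 * x ^ 2 - 1) * (u * x ^ 2 + x ^ 2 - 1)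
      = 1 + (3 * u + 3) * (x * (x ^ 3 - x)) := by
    linear_combination (x ^ 2) * hu
  have hn : IsNilpotent ((3 * u + 3) * (x * (x ^ 3 - x))) :=
    nilp_mul _ (nilp_mul x hq)
  have : IsUnit ((3 * x ^ 2 - 1) * (u * x ^ 2 + x ^ 2 - 1)) := by
    rw [key]; exact hn.isUnit_one_add
  exact isUnit_of_mul_isUnit_left this

private lemma trip_key (h2 : IsUnit ((1 : A) + 1)) :
    ∀ m : ℕ, ∀ a x : A, IsNilpotent (a - x) → (x ^ 3 - x) ^ m = 0 →
      ∃ t : A, t ^ 3 = t ∧ IsNilpotent (a - t) := by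
  intro m
  induction m using Nat.strong_induction_on with
  | _ m ih =>
    intro a x hax hm
    match m, hm with
    | 0, hm =>
      have h10 : (0 : A) = 1 := by simpa using hm.symm
      have : Subsingleton A := subsingleton_of_zero_eq_one h10
      exact ⟨x, Subsingleton.elim _ _, hax⟩
    | 1, hm =>
      exact ⟨x, by rw [← sub_eq_zero]; simpa using hm, hax⟩
    | (k + 2), hm =>
      have hqn : IsNilpotent (x ^ 3 - x) := ⟨k + 2, hm⟩
      obtain ⟨u, hu1⟩ := (aux_unit h2 x hqn).exists_right_inv
      have hstep : (x - (x ^ 3 - x) * u) ^ 3 - (x - (x ^ 3 - x) * u) =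
          (x ^ 3 - x) ^ 2 * (u ^ 2 * (3 * x - (x ^ 3 - x) * u)) := by
        linear_combination (-(x ^ 3 - x)) * hu1
      have hax' : IsNilpotent (a - (x - (x ^ 3 - x) * u)) := by
        have h1 : a - (x - (x ^ 3 - x) * u) = (a - x) + (x ^ 3 - x) * u := by ring
        rw [h1]
        exact (Commute.all _ _).isNilpotent_add hax
          ((Commute.all _ _).isNilpotent_mul_right hqn)
      have hKlt : (k + 3) / 2 < k + 2 := by omega
      have hpow : ((x - (x ^ 3 - x) * u) ^ 3 - (x - (x ^ 3 - x) * u)) ^ ((k + 3) / 2) = 0 := by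
        rw [hstep, mul_pow, ← pow_mul]
        have hq0 : (x ^ 3 - x) ^ (2 * ((k + 3) / 2)) = 0 :=
          pow_eq_zero_of_le (by omega) hm
        rw [hq0, zero_mul]
      exact ih _ hKlt a _ hax' hpow

private lemma tripotent_of_nilpotent (h2 : IsUnit ((1 : A) + 1)) (a : A)
    (h : IsNilpotent (a - a ^ 3)) : ∃ x : A, x ^ 3 = x ∧ IsNilpotent (a - x) := by
  obtain ⟨m, hm⟩ := h
  refine trip_key h2 m a a (by simp) ?_
  have h1 : a ^ 3 - a = -(a - a ^ 3) := by ring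
  rw [h1, neg_pow, hm, mul_zero]

private lemma isNilpotent_of_sq {x : A} (h : IsNilpotent (x ^ 2)) : IsNilpotent x := by
  obtain ⟨n, hn⟩ := h
  exact ⟨2 * n, by rw [pow_mul]; exact hn⟩

private lemma fwd_nil (a b : A) (h : IsNilpotent (a ^ 2 - a * b)) (hb : b = b * a * b) :
    IsNilpotent (a - a ^ 3) := by
  have hi : a * b * (a * b) = a * b := by linear_combination (-a) * hb
  have hu1 : (a * (1 - a * b)) ^ 2 = (a ^ 2 - a * b) * (1 - a * b) := by
    linear_combination (a ^ 2 - 1) * hi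
  have hn1 : IsNilpotent (a * (1 - a * b)) := by
    apply isNilpotent_of_sq
    rw [hu1]
    exact (Commute.all _ _).isNilpotent_mul_right h
  have hsplit : a - a ^ 3 = a * (1 - a * b) - a * (a ^ 2 - a * b) := by ring
  rw [hsplit]
  exact (Commute.all _ _).isNilpotent_sub hn1 (nilp_mul a h)

private lemma back_key (a e f : A) (he : e ^ 2 = e) (hf : f ^ 2 = f)
    (hn : IsNilpotent (a + e - f)) :
    ∃ b : A, IsNilpotent (a ^ 2 - a * b) ∧ a * b = b * a ∧ b = b * a * b := by
  have hx3 : (f - e) ^ 3 = f - e := by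
    linear_combination (3 * f - e - 1) * he + (f + 1 - 3 * e) * hf
  have hax : IsNilpotent (a - (f - e)) := by
    have h1 : a - (f - e) = a + e - f := by ring
    rw [h1]; exact hn
  have hnx : IsNilpotent ((a - (f - e)) * (f - e)) :=
    (Commute.all _ _).isNilpotent_mul_right hax
  obtain ⟨c, hc⟩ := hnx.isUnit_one_add.exists_right_inv
  refine ⟨(f - e) * c, ?_, mul_comm _ _, ?_⟩
  · have hab : a * ((f - e) * c) = (f - e) ^ 2 := by
      linear_combination ((f - e) ^ 2) * hc + ((f - e) * c - a * c) * hx3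
    rw [hab]
    have h1 : a ^ 2 - (f - e) ^ 2 = (a - (f - e)) * (a + (f - e)) := by ring
    rw [h1]
    exact (Commute.all _ _).isNilpotent_mul_right hax
  · linear_combination (-((f - e) * c)) * hc + (-(c ^ 2)) * hx3

end CommAux

/-- The double centralizer of `a`. -/
private abbrev dCent {R : Type*} [Ring R] (a : R) : Subring R :=
  Subring.centralizer ((Subring.centralizer {a} : Subring R) : Set R)

def IsHiranoInverse {R : Type*} [Ring R] (a b : R) : Prop :=
  IsNilpotent (a ^ 2 - a * b) ∧ a * b = b * a ∧ b = b * a * b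

theorem stmt8 {R : Type*} [Ring R] (h2 : IsUnit (2 : R)) (a : R) :
    (∃ b, IsHiranoInverse a b) ↔
    (∃ e f : R, (∀ y : R, a * y = y * a → e * y = y * e) ∧
      (∀ y : R, a * y = y * a → f * y = y * f) ∧
      e ^ 2 = e ∧ f ^ 2 = f ∧ IsNilpotent (a + e - f)) := by
  have memS : ∀ {r : R}, (∀ y, a * y = y * a → r * y = y * r) → r ∈ dCent a := by
    intro r h
    rw [Subring.mem_centralizer_iff]
    intro g hg
    have hga : a * g = g * a :=
      Subring.mem_centralizer_iff.mp hg a (Set.mem_singleton a)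
    exact (h g hga).symm
  have ofS : ∀ {r : R}, r ∈ dCent a → ∀ y, a * y = y * a → r * y = y * r := by
    intro r hr y hy
    have hyc : y ∈ (Subring.centralizer {a} : Subring R) :=
      Subring.mem_centralizer_iff.mpr (by rintro g rfl; exact hy)
    exact (Subring.mem_centralizer_iff.mp hr y hyc).symm
  have haS : a ∈ dCent a := memS (fun y hy => hy)
  have hScomm : ∀ p q : ↥(dCent a), p * q = q * p := by
    intro p q
    apply Subtype.ext
    have hq_comm_a : a * (q : R) = (q : R) * a := (ofS q.2 a rfl).symm
    have hqc : (q : R) ∈ (Subring.centralizer {a} : Subring R) :=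
      Subring.mem_centralizer_iff.mpr (by rintro g rfl; exact hq_comm_a)
    exact (Subring.mem_centralizer_iff.mp p.2 q hqc).symm
  letI : CommRing ↥(dCent a) :=
    { (inferInstance : Ring ↥(dCent a)) with mul_comm := hScomm }
  -- arithmetic facts about the inverse of 2
  have h2comm : ∀ y : R, Commute (2 : R) y := by
    intro y
    show (2 : R) * y = y * 2
    rw [two_mul, mul_two]
  have e1 : (2 : R) * ((h2.unit⁻¹ : Rˣ) : R) = 1 := by
    have h := h2.unit.mul_inv
    rwa [h2.unit_spec] at h
  have hucomm : ∀ y : R, ((h2.unit⁻¹ : Rˣ) : R) * y = y * ((h2.unit⁻¹ : Rˣ) : R) := by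
    intro y
    have hcu : Commute ((h2.unit : Rˣ) : R) y := by
      rw [h2.unit_spec]; exact h2comm y
    exact hcu.units_inv_left
  have huS : ((h2.unit⁻¹ : Rˣ) : R) ∈ dCent a := memS (fun y _ => hucomm y)
  have hS2 : IsUnit ((1 : ↥(dCent a)) + 1) := by
    refine ⟨⟨1 + 1, ⟨((h2.unit⁻¹ : Rˣ) : R), huS⟩, ?_, ?_⟩, rfl⟩
    · apply Subtype.ext
      show ((1 : R) + 1) * ((h2.unit⁻¹ : Rˣ) : R) = 1
      rw [one_add_one_eq_two]; exact e1
    · apply Subtype.ext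
      show ((h2.unit⁻¹ : Rˣ) : R) * ((1 : R) + 1) = 1
      rw [one_add_one_eq_two, ← (h2comm _).eq]; exact e1
  constructor
  · rintro ⟨b, hnb, hab, hbab⟩
    -- Step 1: a - a³ is nilpotent, working in the commutative closure of {a, b}
    have hcomm' : ∀ x ∈ ({a, b} : Set R), ∀ y ∈ ({a, b} : Set R), x * y = y * x := by
      rintro x (rfl | rfl) y (rfl | rfl) <;> first | rfl | exact hab | exact hab.symm
    have h13 : IsNilpotent (a - a ^ 3) := by
      letI : CommRing ↥(Subring.closure ({a, b} : Set R)) :=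
        Subring.closureCommRingOfComm hcomm'
      have haT : a ∈ Subring.closure ({a, b} : Set R) := Subring.subset_closure (by simp)
      have hbT : b ∈ Subring.closure ({a, b} : Set R) := Subring.subset_closure (by simp)
      have hnbT : IsNilpotent ((⟨a, haT⟩ : Subring.closure ({a, b} : Set R)) ^ 2
          - ⟨a, haT⟩ * ⟨b, hbT⟩) := by
        obtain ⟨n, hn⟩ := hnb
        exact ⟨n, Subtype.ext hn⟩
      have h13T := fwd_nil (⟨a, haT⟩ : Subring.closure ({a, b} : Set R)) ⟨b, hbT⟩ hnbT
        (Subtype.ext hbab)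
      obtain ⟨n, hn⟩ := h13T
      exact ⟨n, congrArg Subtype.val hn⟩
    -- Step 2: lift to an exact tripotent in the double centralizer
    have h13S : IsNilpotent ((⟨a, haS⟩ : ↥(dCent a)) - (⟨a, haS⟩ : ↥(dCent a)) ^ 3) := by
      obtain ⟨n, hn⟩ := h13
      exact ⟨n, Subtype.ext hn⟩
    obtain ⟨x, hx3, hxnil⟩ := tripotent_of_nilpotent hS2 (⟨a, haS⟩ : ↥(dCent a)) h13S
    obtain ⟨v, hv⟩ := hS2.exists_right_inv
    refine ⟨((v * (x ^ 2 - x) : ↥(dCent a)) : R), ((v * (x ^ 2 + x) : ↥(dCent a)) : R),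
      ofS (v * (x ^ 2 - x) : ↥(dCent a)).2, ofS (v * (x ^ 2 + x) : ↥(dCent a)).2, ?_, ?_, ?_⟩
    · have hE : (v * (x ^ 2 - x)) ^ 2 = v * (x ^ 2 - x) := by
        linear_combination (v ^ 2 * (x - 2)) * hx3 + (v * (x ^ 2 - x)) * hv
      exact congrArg Subtype.val hE
    · have hF : (v * (x ^ 2 + x)) ^ 2 = v * (x ^ 2 + x) := by
        linear_combination (v ^ 2 * (x + 2)) * hx3 + (v * (x ^ 2 + x)) * hv
      exact congrArg Subtype.val hF
    · have hsum : (⟨a, haS⟩ : ↥(dCent a)) + v * (x ^ 2 - x) - v * (x ^ 2 + x)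
          = (⟨a, haS⟩ : ↥(dCent a)) - x := by
        linear_combination (-x) * hv
      have hh : IsNilpotent ((⟨a, haS⟩ : ↥(dCent a)) + v * (x ^ 2 - x) - v * (x ^ 2 + x)) := by
        rw [hsum]; exact hxnil
      obtain ⟨n, hn⟩ := hh
      exact ⟨n, congrArg Subtype.val hn⟩
  · rintro ⟨e, f, he, hf, he2, hf2, hnil⟩
    have heS : e ∈ dCent a := memS he
    have hfS : f ∈ dCent a := memS hf
    have he2S : (⟨e, heS⟩ : ↥(dCent a)) ^ 2 = ⟨e, heS⟩ := Subtype.ext he2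
    have hf2S : (⟨f, hfS⟩ : ↥(dCent a)) ^ 2 = ⟨f, hfS⟩ := Subtype.ext hf2
    have hnilS : IsNilpotent ((⟨a, haS⟩ : ↥(dCent a)) + ⟨e, heS⟩ - ⟨f, hfS⟩) := by
      obtain ⟨n, hn⟩ := hnil
      exact ⟨n, Subtype.ext hn⟩
    obtain ⟨bS, hb1, hb2, hb3⟩ :=
      back_key (⟨a, haS⟩ : ↥(dCent a)) ⟨e, heS⟩ ⟨f, hfS⟩ he2S hf2S hnilS
    refine ⟨(bS : R), ?_, ?_, ?_⟩
    · obtain ⟨n, hn⟩ := hb1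
      exact ⟨n, congrArg Subtype.val hn⟩
    · exact congrArg Subtype.val hb2
    · exact congrArg Subtype.val hb3
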